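/- Let I ⊆ ℝ be an interval, let T : I → I be a bijection, let a : I → ℝ be an injective continuously differentiable solution of FET(1) (a(T(x)) = a(x) + 1 for all x ∈ I), and let f : I → ℝ be a continuously differentiable solution of FET(0) (f(T(x)) = f(x) for all x ∈ I). Then there exists a function P : ℝ → ℝ, periodic with period 1, such that f(x) = P(a(x)) for all x ∈ I. -/
import Mathlib


open Set

/-- If `a` is an injective C¹ solution of FET(1) and `f` a C¹ solution of
FET(0) on an interval `I` with `T : I → I` a bijection, then `f = P ∘ a` on `I` for some
period-1 function `P`. -/
theorem stmt7 (I : Set ℝ) (hI : I.OrdConnected) (T : ℝ → ℝ) (hT : BijOn T I I)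
    (a : ℝ → ℝ) (hainj : InjOn a I) (haC1 : ContDiffOn ℝ 1 a I)
    (hAbel : ∀ x ∈ I, a (T x) = a x + 1)
    (f : ℝ → ℝ) (hfC1 : ContDiffOn ℝ 1 f I)
    (hSchroder : ∀ x ∈ I, f (T x) = f x) :
    ∃ P : ℝ → ℝ, (∀ y : ℝ, P (y + 1) = P y) ∧ ∀ x ∈ I, f x = P (a x) := by
  classical
  have hiter : ∀ k : ℕ, ∀ x ∈ I, T^[k] x ∈ I ∧ a (T^[k] x) = a x + k ∧ f (T^[k] x) = f x := by
    intro k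
    induction k with
    | zero => intro x hx; simp [hx]
    | succ n ih =>
      intro x hx
      obtain ⟨h1, h2, h3⟩ := ih x hx
      have hT1 := hT.mapsTo h1
      refine ⟨?_, ?_, ?_⟩
      · rw [Function.iterate_succ_apply']; exact hT1
      · rw [Function.iterate_succ_apply', hAbel _ h1, h2]; push_cast; ring
      · rw [Function.iterate_succ_apply', hSchroder _ h1, h3]
  have key : ∀ x ∈ I, ∀ x' ∈ I, ∀ k : ℤ, a x' = a x + k → f x' = f x := by
    intro x hx x' hx' k hk
    rcases le_or_gt 0 k with h | h
    · lift k to ℕ using h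
      obtain ⟨h1, h2, h3⟩ := hiter k x hx
      have heq : a x' = a (T^[k] x) := by rw [h2]; exact_mod_cast hk
      rw [hainj hx' h1 heq, h3]
    · obtain ⟨m, hm⟩ : ∃ m : ℕ, k = -(m : ℤ) := ⟨k.natAbs, by omega⟩
      obtain ⟨h1, h2, h3⟩ := hiter m x' hx'
      have heq : a x = a (T^[m] x') := by
        rw [h2]
        have : (k : ℝ) = -(m : ℝ) := by exact_mod_cast congrArg (Int.cast : ℤ → ℝ) hm
        rw [hk, this]; ring
      rw [← h3, ← hainj hx h1 heq]
  set S : ℝ → Prop := fun y => ∃ p : ℝ × ℤ, p.1 ∈ I ∧ a p.1 = y + p.2 with hS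
  have hval : ∀ y, ∀ h : S y, ∀ x ∈ I, ∀ n : ℤ, a x = y + n → f x = f h.choose.1 := by
    intro y h x hx n hn
    obtain ⟨hc1, hc2⟩ := h.choose_spec
    refine key _ hc1 _ hx (n - h.choose.2) ?_
    rw [hn, hc2]; push_cast; ring
  refine ⟨fun y => if h : S y then f h.choose.1 else 0, ?_, ?_⟩
  · intro y
    by_cases h : S y
    · have h' : S (y + 1) := by
        obtain ⟨⟨x, n⟩, hx, hn⟩ := h
        exact ⟨⟨x, n - 1⟩, hx, by push_cast; simp at hn ⊢; linarith⟩
      simp only [dif_pos h, dif_pos h']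
      obtain ⟨hc1, hc2⟩ := h'.choose_spec
      exact hval y h _ hc1 (h'.choose.2 + 1) (by push_cast; rw [hc2]; push_cast; ring)
    · have h' : ¬ S (y + 1) := by
        rintro ⟨⟨x, n⟩, hx, hn⟩
        exact h ⟨⟨x, n + 1⟩, hx, by push_cast; simp at hn ⊢; linarith⟩
      simp only [dif_neg h, dif_neg h']
  · intro x hx
    have h : S (a x) := ⟨⟨x, 0⟩, hx, by simp⟩
    simp only [dif_pos h]
    exact hval (a x) h x hx 0 (by simp)
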